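/- For every r > 0 the identity −(1/2)·d/dr( Υ(r)·V₁(r) ) − (4Υ(r)/r⁵)·(r² − 4Mr + 3Q²) = (10Q²/r⁷)·(2r² − 5Mr + 3Q²) holds. Moreover 2r² − 5Mr + 3Q² > 0 for every r ≥ r_P, so the left-hand side is nonnegative for all r ≥ r_P. -/

import Mathlib

noncomputable section

/-- The Reissner–Nordström lapse function `Υ(r) = 1 - 2M/r + Q²/r²`. -/
def Upsilon (M Q r : ℝ) : ℝ := 1 - 2*M/r + Q^2/r^2

/-- The photon-sphere radius `r_P = (3M + √(9M² - 8Q²))/2`. -/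
def rP (M Q : ℝ) : ℝ := (3*M + Real.sqrt (9*M^2 - 8*Q^2)) / 2

/-- The Regge–Wheeler potential `V₁(r) = r⁻²(4 - 8M/r + 14Q²/r²)`. -/
def V1 (M Q r : ℝ) : ℝ := (1 / r^2) * (4 - 8*M/r + 14*Q^2/r^2)

lemma deriv_UV (M Q r : ℝ) (hr : 0 < r) :
    deriv (fun s => Upsilon M Q s * V1 M Q s) r
      = 4 * (-(2*r) / (r^2)^2) - 16*M * (-(3*r^2) / (r^3)^2)
        + (18*Q^2+16*M^2) * (-(4*r^3) / (r^4)^2)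
        - 36*M*Q^2 * (-(5*r^4) / (r^5)^2) + 14*Q^4 * (-(6*r^5) / (r^6)^2) := by
  have hne : r ≠ 0 := hr.ne'
  have hinv : ∀ n : ℕ, HasDerivAt (fun s : ℝ => (s^n)⁻¹)
      (-(n*r^(n-1)) / (r^n)^2) r := by
    intro n
    exact (hasDerivAt_pow n r).inv (pow_ne_zero n hne)
  have hg : HasDerivAt (fun s : ℝ => 4*(s^2)⁻¹ - 16*M*(s^3)⁻¹
      + (18*Q^2+16*M^2)*(s^4)⁻¹ - 36*M*Q^2*(s^5)⁻¹ + 14*Q^4*(s^6)⁻¹)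
      (4 * (-(2*r) / (r^2)^2) - 16*M * (-(3*r^2) / (r^3)^2)
        + (18*Q^2+16*M^2) * (-(4*r^3) / (r^4)^2)
        - 36*M*Q^2 * (-(5*r^4) / (r^5)^2) + 14*Q^4 * (-(6*r^5) / (r^6)^2)) r := by
    have h2 := (hinv 2).const_mul (4:ℝ)
    have h3 := (hinv 3).const_mul (16*M)
    have h4 := (hinv 4).const_mul (18*Q^2+16*M^2)
    have h5 := (hinv 5).const_mul (36*M*Q^2)
    have h6 := (hinv 6).const_mul (14*Q^4)
    have := ((((h2.sub h3).add h4).sub h5).add h6)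
    exact this.congr_deriv (by norm_num)
  have heq : (fun s => Upsilon M Q s * V1 M Q s) =ᶠ[nhds r]
      (fun s : ℝ => 4*(s^2)⁻¹ - 16*M*(s^3)⁻¹
      + (18*Q^2+16*M^2)*(s^4)⁻¹ - 36*M*Q^2*(s^5)⁻¹ + 14*Q^4*(s^6)⁻¹) := by
    filter_upwards [eventually_ne_nhds hne] with s hs
    unfold Upsilon V1
    field_simp
    ring
  rw [heq.deriv_eq, hg.deriv]

theorem A1_identity_and_nonneg (M Q : ℝ) (hM : 0 < M) (hQ : |Q| < M) :
    (∀ r : ℝ, 0 < r →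
      -(1/2) * deriv (fun s => Upsilon M Q s * V1 M Q s) r
        - (4 * Upsilon M Q r / r^5) * (r^2 - 4*M*r + 3*Q^2)
        = (10*Q^2 / r^7) * (2*r^2 - 5*M*r + 3*Q^2)) ∧
    (∀ r : ℝ, rP M Q ≤ r → 0 < 2*r^2 - 5*M*r + 3*Q^2) ∧
    (∀ r : ℝ, rP M Q ≤ r →
      0 ≤ -(1/2) * deriv (fun s => Upsilon M Q s * V1 M Q s) r
        - (4 * Upsilon M Q r / r^5) * (r^2 - 4*M*r + 3*Q^2)) := by
  have hQ2 : Q^2 < M^2 := by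
    have := sq_lt_sq' (neg_lt_of_abs_lt hQ) (lt_of_abs_lt hQ)
    simpa using this
  -- facts about rP
  set s := Real.sqrt (9*M^2 - 8*Q^2) with hs
  have hs2 : s^2 = 9*M^2 - 8*Q^2 := Real.sq_sqrt (by nlinarith)
  have hMs : M < s := by
    have h : M^2 < s^2 := by nlinarith
    exact lt_of_pow_lt_pow_left₀ 2 (Real.sqrt_nonneg _) h
  have hrP : rP M Q = (3*M + s)/2 := rfl
  have hrP2M : 2*M < rP M Q := by rw [hrP]; nlinarith
  have hid : ∀ r : ℝ, 0 < r →
      -(1/2) * deriv (fun s => Upsilon M Q s * V1 M Q s) r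
        - (4 * Upsilon M Q r / r^5) * (r^2 - 4*M*r + 3*Q^2)
        = (10*Q^2 / r^7) * (2*r^2 - 5*M*r + 3*Q^2) := by
    intro r hr
    rw [deriv_UV M Q r hr]
    unfold Upsilon
    have hne : r ≠ 0 := hr.ne'
    field_simp
    ring
  have hpos : ∀ r : ℝ, rP M Q ≤ r → 0 < 2*r^2 - 5*M*r + 3*Q^2 := by
    intro r hrp
    have h1 : rP M Q ^ 2 = 3*M*(rP M Q) - 2*Q^2 := by rw [hrP]; nlinarith
    nlinarith [mul_nonneg (sub_nonneg.2 hrp) (by nlinarith : (0:ℝ) ≤ 2*(r + rP M Q) - 5*M)]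
  refine ⟨hid, hpos, fun r hrp => ?_⟩
  have hr0 : 0 < r := lt_of_lt_of_le (by nlinarith) hrp
  rw [hid r hr0]
  have : 0 ≤ 10*Q^2 / r^7 := by positivity
  exact mul_nonneg this (hpos r hrp).le
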